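/- Let q be a positive integer, let φ₁,…,φ_N be reals, let c₁,…,c_N be complex numbers and a₁,…,a_N non-negative reals with |c_n| ≤ a_n for all n. Then for any reals T > 0 and T₀, ∫_{|t−T₀| ≤ T} |∑_{n=1}^N c_n e^{i t φ_n}|^{2q} dt ≤ 3 ∫_{|t| ≤ T} |∑_{n=1}^N a_n e^{i t φ_n}|^{2q} dt. -/

import Mathlib

open MeasureTheory Complex intervalIntegral

noncomputable def psiK (T t : ℝ) : ℝ := max 0 (1 - |t| / T)

lemma psiK_nonneg (T t : ℝ) : 0 ≤ psiK T t := le_max_left _ _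

lemma psiK_le_one {T : ℝ} (hT : 0 < T) (t : ℝ) : psiK T t ≤ 1 :=
  max_le (by norm_num) (by
    have : 0 ≤ |t| / T := div_nonneg (abs_nonneg _) hT.le
    linarith)

lemma psiK_eq_zero {T t : ℝ} (hT : 0 < T) (h : T ≤ |t|) : psiK T t = 0 :=
  max_eq_left (by
    have h1 : 1 ≤ |t| / T := (le_div_iff₀ hT).2 (by linarith)
    linarith)

lemma psiK_continuous (T : ℝ) : Continuous (psiK T) := by
  unfold psiK; fun_prop

lemma psiK_eq_right {T t : ℝ} (hT : 0 < T) (h0 : 0 ≤ t) (h1 : t ≤ T) :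
    psiK T t = 1 - t / T := by
  unfold psiK
  rw [_root_.abs_of_nonneg h0]
  exact max_eq_right (by rw [sub_nonneg]; exact (div_le_one hT).2 h1)

lemma psiK_eq_left {T t : ℝ} (hT : 0 < T) (h0 : -T ≤ t) (h1 : t ≤ 0) :
    psiK T t = 1 + t / T := by
  unfold psiK
  rw [abs_of_nonpos h1]
  have : -t / T ≤ 1 := (div_le_one hT).2 (by linarith)
  rw [max_eq_right (by linarith)]
  ring_nf

lemma one_le_three_psiK {T : ℝ} (hT : 0 < T) {s : ℝ} (h : |s| ≤ T) :
    1 ≤ psiK T s + psiK T (s - T) + psiK T (s + T) := by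
  have habs := abs_le.1 h
  rcases le_total 0 s with hs | hs
  · have h1 : 1 - s / T ≤ psiK T s := by
      rw [psiK_eq_right hT hs habs.2]
    have h2 : s / T ≤ psiK T (s - T) := by
      rw [psiK_eq_left hT (by linarith) (by linarith)]
      have : (s - T) / T = s / T - 1 := by field_simp
      rw [this]; linarith
    have h3 : 0 ≤ psiK T (s + T) := psiK_nonneg _ _
    linarith
  · have h1 : 1 + s / T ≤ psiK T s := by
      rw [psiK_eq_left hT habs.1 hs]
    have h2 : -(s / T) ≤ psiK T (s + T) := by
      rw [psiK_eq_right hT (by linarith) (by linarith)]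
      have : (s + T) / T = s / T + 1 := by field_simp
      rw [this]; linarith
    have h3 : 0 ≤ psiK T (s - T) := psiK_nonneg _ _
    linarith

noncomputable def WK (T θ : ℝ) : ℝ :=
  if θ = 0 then (∫ s in (-T)..T, psiK T s) else (2 - 2 * Real.cos (T * θ)) / (T * θ ^ 2)

lemma WK_nonneg {T : ℝ} (hT : 0 < T) (θ : ℝ) : 0 ≤ WK T θ := by
  unfold WK
  split_ifs
  · exact intervalIntegral.integral_nonneg (by linarith) (fun t _ => psiK_nonneg T t)
  · have h1 : Real.cos (T * θ) ≤ 1 := Real.cos_le_one _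
    have hθ : θ ≠ 0 := by assumption
    have h2 : 0 < T * θ ^ 2 := by positivity
    have h3 : 0 ≤ 2 - 2 * Real.cos (T * θ) := by linarith
    positivity

-- derivative of exp (I t θ) as a function of real t
lemma hasDerivAt_expItθ (θ s : ℝ) :
    HasDerivAt (fun t : ℝ => Complex.exp (Complex.I * t * θ))
      (Complex.exp (Complex.I * s * θ) * (Complex.I * θ)) s := by
  have h0 : HasDerivAt (fun t : ℝ => (t : ℂ)) 1 s := by
    simpa using (hasDerivAt_id s).ofReal_comp
  have h1 : HasDerivAt (fun t : ℝ => (t : ℂ) * (Complex.I * θ)) (Complex.I * θ) s := by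
    simpa using h0.mul_const (Complex.I * (θ : ℂ))
  have := h1.cexp
  simpa [show ∀ t : ℝ, (t:ℂ) * (Complex.I * θ) = Complex.I * t * θ from fun t => by ring]
    using this

lemma hasDerivAt_ofRealC (s : ℝ) : HasDerivAt (fun t : ℝ => (t : ℂ)) 1 s := by
  simpa using (hasDerivAt_id s).ofReal_comp

lemma integral_psiK_exp {T : ℝ} (hT : 0 < T) (θ : ℝ) :
    (∫ s in (-T)..T, (psiK T s : ℂ) * Complex.exp (Complex.I * s * θ)) = ((WK T θ : ℝ) : ℂ) := by
  have hcont : Continuous (fun s : ℝ => (psiK T s : ℂ) * Complex.exp (Complex.I * s * θ)) :=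
    (Complex.continuous_ofReal.comp (psiK_continuous T)).mul (by fun_prop)
  by_cases hθ : θ = 0
  · subst hθ
    unfold WK
    rw [if_pos rfl]
    simp only [Complex.ofReal_zero, mul_zero, Complex.exp_zero, mul_one]
    exact intervalIntegral.integral_ofReal
  · have hTc : (T : ℂ) ≠ 0 := Complex.ofReal_ne_zero.2 hT.ne'
    have hθc : (θ : ℂ) ≠ 0 := Complex.ofReal_ne_zero.2 hθ
    have h1 : IntervalIntegrable (fun s : ℝ => (psiK T s : ℂ) * Complex.exp (Complex.I * s * θ))
        volume (-T) 0 := hcont.intervalIntegrable _ _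
    have h2 : IntervalIntegrable (fun s : ℝ => (psiK T s : ℂ) * Complex.exp (Complex.I * s * θ))
        volume 0 T := hcont.intervalIntegrable _ _
    rw [← intervalIntegral.integral_add_adjacent_intervals h1 h2]
    -- left piece
    have hleft : (∫ s in (-T)..(0:ℝ), (psiK T s : ℂ) * Complex.exp (Complex.I * s * θ))
        = ∫ s in (-T)..(0:ℝ), (1 + (s:ℂ)/T) * Complex.exp (Complex.I * s * θ) := by
      apply intervalIntegral.integral_congr
      intro s hs
      rw [Set.uIcc_of_le (by linarith : -T ≤ (0:ℝ))] at hs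
      simp only [psiK_eq_left hT hs.1 hs.2]
      push_cast
      ring
    have hright : (∫ s in (0:ℝ)..T, (psiK T s : ℂ) * Complex.exp (Complex.I * s * θ))
        = ∫ s in (0:ℝ)..T, (1 - (s:ℂ)/T) * Complex.exp (Complex.I * s * θ) := by
      apply intervalIntegral.integral_congr
      intro s hs
      rw [Set.uIcc_of_le hT.le] at hs
      simp only [psiK_eq_right hT hs.1 hs.2]
      push_cast
      ring
    set Fm : ℝ → ℂ := fun t =>
      (1 + (t:ℂ)/T) * Complex.exp (Complex.I * t * θ) * (Complex.I * θ)⁻¹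
        + Complex.exp (Complex.I * t * θ) * ((T:ℂ) * θ^2)⁻¹ with hFm
    set Fp : ℝ → ℂ := fun t =>
      (1 - (t:ℂ)/T) * Complex.exp (Complex.I * t * θ) * (Complex.I * θ)⁻¹
        - Complex.exp (Complex.I * t * θ) * ((T:ℂ) * θ^2)⁻¹ with hFp
    have hderivm : ∀ s ∈ Set.uIcc (-T) (0:ℝ),
        HasDerivAt Fm ((1 + (s:ℂ)/T) * Complex.exp (Complex.I * s * θ)) s := by
      intro s _
      have hA : HasDerivAt (fun t : ℝ => 1 + (t:ℂ)/T) ((T:ℂ)⁻¹) s := by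
        simpa [one_div] using ((hasDerivAt_ofRealC s).div_const (T:ℂ)).const_add 1
      have hB := hasDerivAt_expItθ θ s
      have hF := ((hA.mul hB).mul_const ((Complex.I * θ)⁻¹)).add
        (hB.mul_const (((T:ℂ) * θ^2)⁻¹))
      convert hF using 1
      case e'_4 => rfl
      case e'_8 => rfl
      rw [mul_inv, Complex.inv_I]
      field_simp
      ring_nf
      simp [Complex.I_sq]
    have hderivp : ∀ s ∈ Set.uIcc (0:ℝ) T,
        HasDerivAt Fp ((1 - (s:ℂ)/T) * Complex.exp (Complex.I * s * θ)) s := by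
      intro s _
      have hA : HasDerivAt (fun t : ℝ => 1 - (t:ℂ)/T) (-(T:ℂ)⁻¹) s := by
        simpa [one_div] using ((hasDerivAt_ofRealC s).div_const (T:ℂ)).const_sub 1
      have hB := hasDerivAt_expItθ θ s
      have hF := ((hA.mul hB).mul_const ((Complex.I * θ)⁻¹)).sub
        (hB.mul_const (((T:ℂ) * θ^2)⁻¹))
      convert hF using 1
      case e'_4 => rfl
      case e'_8 => rfl
      rw [mul_inv, Complex.inv_I]
      field_simp
      ring_nf
      simp [Complex.I_sq]
      ring
    have hint1 : Continuous (fun s : ℝ => (1 + (s:ℂ)/T) * Complex.exp (Complex.I * s * θ)) := by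
      fun_prop
    have hint2 : Continuous (fun s : ℝ => (1 - (s:ℂ)/T) * Complex.exp (Complex.I * s * θ)) := by
      fun_prop
    rw [hleft, hright,
      intervalIntegral.integral_eq_sub_of_hasDerivAt hderivm (hint1.intervalIntegrable _ _),
      intervalIntegral.integral_eq_sub_of_hasDerivAt hderivp (hint2.intervalIntegrable _ _)]
    have hEne : Complex.exp (Complex.I * ((T:ℝ):ℂ) * θ) ≠ 0 := Complex.exp_ne_zero _
    have hE : Complex.exp (Complex.I * ((T:ℝ):ℂ) * θ) + (Complex.exp (Complex.I * ((T:ℝ):ℂ) * θ))⁻¹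
        = 2 * ((Real.cos (T * θ) : ℝ) : ℂ) := by
      rw [← Complex.exp_neg]
      rw [show Complex.I * ((T:ℝ):ℂ) * θ = ((T * θ : ℝ) : ℂ) * Complex.I by push_cast; ring]
      rw [show -(((T * θ : ℝ) : ℂ) * Complex.I) = (-((T * θ : ℝ) : ℂ)) * Complex.I by ring]
      rw [Complex.exp_mul_I, Complex.exp_mul_I, Complex.cos_neg, Complex.sin_neg,
        ← Complex.ofReal_cos]
      ring
    have hz1 : (1 + ((-T:ℝ):ℂ)/T) = 0 := by
      push_cast
      field_simp
      norm_num
    have hz2 : (1 - ((T:ℝ):ℂ)/T) = 0 := by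
      field_simp
      norm_num
    simp only [hFm, hFp, Complex.ofReal_zero, mul_zero, zero_mul, Complex.exp_zero, mul_one,
      one_mul]
    rw [hz1, hz2]
    rw [show Complex.I * ((-T:ℝ):ℂ) * (θ:ℂ) = -(Complex.I * ((T:ℝ):ℂ) * θ) by push_cast; ring,
      Complex.exp_neg]
    unfold WK
    rw [if_neg hθ]
    rw [show (((2 - 2*Real.cos (T*θ))/(T*θ^2) : ℝ) : ℂ)
        = (2 - 2*((Real.cos (T*θ) : ℝ):ℂ)) / ((T:ℂ)*(θ:ℂ)^2) by push_cast; ring]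
    linear_combination (-(((T:ℂ)*(θ:ℂ)^2)⁻¹)) * hE

lemma kernel_window {T : ℝ} (hT : 0 < T) (θ τ L R : ℝ) (hL : L ≤ τ - T) (hR : τ + T ≤ R) :
    (∫ t in L..R, (psiK T (t - τ) : ℂ) * Complex.exp (Complex.I * t * θ))
      = Complex.exp (Complex.I * τ * θ) * ((WK T θ : ℝ) : ℂ) := by
  have hc : Continuous (fun t : ℝ => (psiK T (t - τ) : ℂ) * Complex.exp (Complex.I * t * θ)) :=
    (Complex.continuous_ofReal.comp ((psiK_continuous T).comp (by fun_prop))).mul (by fun_prop)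
  have hTT : τ - T ≤ τ + T := by linarith
  have hsplit1 := intervalIntegral.integral_add_adjacent_intervals
    (hc.intervalIntegrable (μ := volume) L (τ - T)) (hc.intervalIntegrable (τ - T) R)
  have hsplit2 := intervalIntegral.integral_add_adjacent_intervals
    (hc.intervalIntegrable (μ := volume) (τ - T) (τ + T)) (hc.intervalIntegrable (τ + T) R)
  have hzero1 : (∫ t in L..(τ - T), (psiK T (t - τ) : ℂ) * Complex.exp (Complex.I * t * θ)) = 0 := by
    have heq : Set.EqOn (fun t : ℝ => (psiK T (t - τ) : ℂ) * Complex.exp (Complex.I * t * θ))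
        (fun _ => (0:ℂ)) (Set.uIcc L (τ - T)) := by
      intro t ht
      rw [Set.uIcc_of_le hL] at ht
      have : T ≤ |t - τ| := by
        rw [_root_.abs_of_nonpos (by linarith [ht.2] : t - τ ≤ 0)]
        linarith [ht.2]
      simp [psiK_eq_zero hT this]
    rw [intervalIntegral.integral_congr heq, intervalIntegral.integral_zero]
  have hzero2 : (∫ t in (τ + T)..R, (psiK T (t - τ) : ℂ) * Complex.exp (Complex.I * t * θ)) = 0 := by
    have heq : Set.EqOn (fun t : ℝ => (psiK T (t - τ) : ℂ) * Complex.exp (Complex.I * t * θ))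
        (fun _ => (0:ℂ)) (Set.uIcc (τ + T) R) := by
      intro t ht
      rw [Set.uIcc_of_le hR] at ht
      have : T ≤ |t - τ| := by
        rw [_root_.abs_of_nonneg (by linarith [ht.1] : 0 ≤ t - τ)]
        linarith [ht.1]
      simp [psiK_eq_zero hT this]
    rw [intervalIntegral.integral_congr heq, intervalIntegral.integral_zero]
  rw [← hsplit1, ← hsplit2, hzero1, hzero2, zero_add, add_zero]
  set g : ℝ → ℂ := fun s => (psiK T s : ℂ) * Complex.exp (Complex.I * ((s : ℂ) + τ) * θ) with hg
  have hfg : (fun t : ℝ => (psiK T (t - τ) : ℂ) * Complex.exp (Complex.I * t * θ))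
      = fun t => g (t - τ) := by
    funext t
    rw [hg]
    simp only
    push_cast
    ring_nf
  rw [hfg, intervalIntegral.integral_comp_sub_right g τ,
    show τ - T - τ = -T by ring, show τ + T - τ = T by ring]
  have hg2 : g = fun s => Complex.exp (Complex.I * τ * θ)
      * ((psiK T s : ℂ) * Complex.exp (Complex.I * s * θ)) := by
    funext s
    rw [hg]
    simp only
    rw [show Complex.I * ((s:ℂ) + τ) * θ = Complex.I * s * θ + Complex.I * τ * θ by ring,
      Complex.exp_add]
    ring
  rw [hg2, intervalIntegral.integral_const_mul, integral_psiK_exp hT θ]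

noncomputable def SfunK {N : ℕ} (φ : Fin N → ℝ) (d : Fin N → ℂ) (t : ℝ) : ℂ :=
  ∑ n, d n * Complex.exp (Complex.I * t * φ n)

noncomputable def CprodK {N : ℕ} (q : ℕ) (d : Fin N → ℂ) (ν : Fin q → Fin N) : ℂ :=
  ∏ i, d (ν i)

noncomputable def PhiK {N : ℕ} (q : ℕ) (φ : Fin N → ℝ) (ν : Fin q → Fin N) : ℝ :=
  ∑ i, φ (ν i)

lemma SfunK_continuous {N : ℕ} (φ : Fin N → ℝ) (d : Fin N → ℂ) :
    Continuous (SfunK φ d) := by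
  unfold SfunK; fun_prop

lemma SfunK_pow {N : ℕ} (q : ℕ) (φ : Fin N → ℝ) (d : Fin N → ℂ) (t : ℝ) :
    (SfunK φ d t) ^ q = ∑ ν : Fin q → Fin N,
      CprodK q d ν * Complex.exp (Complex.I * t * (PhiK q φ ν : ℝ)) := by
  have h1 : (SfunK φ d t) ^ q = ∏ _i : Fin q, SfunK φ d t := by
    simp [Finset.prod_const]
  rw [h1]
  unfold SfunK
  rw [Finset.prod_univ_sum]
  apply Finset.sum_congr rfl
  intro ν _
  rw [Finset.prod_mul_distrib]
  unfold CprodK PhiK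
  congr 1
  rw [← Complex.exp_sum]
  congr 1
  push_cast
  rw [← Finset.mul_sum]

lemma SfunK_conj_pow {N : ℕ} (q : ℕ) (φ : Fin N → ℝ) (d : Fin N → ℂ) (t : ℝ) :
    (starRingEnd ℂ) (SfunK φ d t) ^ q = ∑ ν : Fin q → Fin N,
      (starRingEnd ℂ) (CprodK q d ν) * Complex.exp (- (Complex.I * t * (PhiK q φ ν : ℝ))) := by
  rw [← map_pow, SfunK_pow q φ d t, map_sum]
  apply Finset.sum_congr rfl
  intro ν _
  rw [map_mul, ← Complex.exp_conj]
  congr 1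
  simp [Complex.conj_ofReal]

lemma key_expand {T : ℝ} (hT : 0 < T) {N : ℕ} (q : ℕ) (φ : Fin N → ℝ) (d : Fin N → ℂ)
    (τ L R : ℝ) (hL : L ≤ τ - T) (hR : τ + T ≤ R) :
    ((∫ t in L..R, psiK T (t - τ) * ‖SfunK φ d t‖ ^ (2*q) : ℝ) : ℂ)
      = ∑ ν : Fin q → Fin N, ∑ μ : Fin q → Fin N,
          (CprodK q d ν * (starRingEnd ℂ) (CprodK q d μ)) *
            (Complex.exp (Complex.I * τ * ((PhiK q φ ν - PhiK q φ μ : ℝ) : ℂ)) *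
              ((WK T (PhiK q φ ν - PhiK q φ μ) : ℝ) : ℂ)) := by
  have hpt : ∀ t : ℝ, ((psiK T (t - τ) * ‖SfunK φ d t‖ ^ (2*q) : ℝ) : ℂ)
      = ∑ ν : Fin q → Fin N, ∑ μ : Fin q → Fin N,
          (psiK T (t - τ) : ℂ) * ((CprodK q d ν * (starRingEnd ℂ) (CprodK q d μ)) *
            Complex.exp (Complex.I * t * ((PhiK q φ ν - PhiK q φ μ : ℝ) : ℂ))) := by
    intro t
    have hnorm : ((‖SfunK φ d t‖ ^ (2*q) : ℝ) : ℂ)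
        = (SfunK φ d t)^q * ((starRingEnd ℂ) (SfunK φ d t))^q := by
      have h1 : ‖SfunK φ d t‖ ^ (2*q) = (Complex.normSq (SfunK φ d t))^q := by
        rw [Complex.normSq_eq_norm_sq, ← pow_mul]
      rw [h1, Complex.ofReal_pow, ← Complex.mul_conj, mul_pow]
    have h2 : ((psiK T (t - τ) * ‖SfunK φ d t‖ ^ (2*q) : ℝ) : ℂ)
        = (psiK T (t - τ) : ℂ) * ((‖SfunK φ d t‖ ^ (2*q) : ℝ) : ℂ) := by
      push_cast; ring
    rw [h2, hnorm, SfunK_pow, SfunK_conj_pow, Finset.sum_mul_sum, Finset.mul_sum]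
    apply Finset.sum_congr rfl
    intro ν _
    rw [Finset.mul_sum]
    apply Finset.sum_congr rfl
    intro μ _
    have hexp : Complex.exp (Complex.I * t * (PhiK q φ ν : ℝ)) *
        Complex.exp (-(Complex.I * t * (PhiK q φ μ : ℝ)))
        = Complex.exp (Complex.I * t * ((PhiK q φ ν - PhiK q φ μ : ℝ) : ℂ)) := by
      rw [← Complex.exp_add]
      congr 1
      push_cast
      ring
    rw [← hexp]
    ring
  have hcont : ∀ (K : ℂ) (θ : ℝ), Continuous (fun t : ℝ =>
      (psiK T (t - τ) : ℂ) * (K * Complex.exp (Complex.I * t * (θ : ℂ)))) := by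
    intro K θ
    exact (Complex.continuous_ofReal.comp ((psiK_continuous T).comp (by fun_prop))).mul
      (by fun_prop)
  rw [← intervalIntegral.integral_ofReal]
  simp_rw [hpt]
  rw [intervalIntegral.integral_finset_sum (fun ν _ => ((by
    apply Continuous.intervalIntegrable
    exact continuous_finset_sum _ (fun μ _ => hcont _ _))))]
  apply Finset.sum_congr rfl
  intro ν _
  rw [intervalIntegral.integral_finset_sum (fun μ _ => (hcont _ _).intervalIntegrable _ _)]
  apply Finset.sum_congr rfl
  intro μ _
  rw [show (fun t : ℝ => (psiK T (t - τ) : ℂ) * ((CprodK q d ν * (starRingEnd ℂ) (CprodK q d μ)) *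
      Complex.exp (Complex.I * t * ((PhiK q φ ν - PhiK q φ μ : ℝ) : ℂ))))
    = fun t : ℝ => (CprodK q d ν * (starRingEnd ℂ) (CprodK q d μ)) *
      ((psiK T (t - τ) : ℂ) * Complex.exp (Complex.I * t * ((PhiK q φ ν - PhiK q φ μ : ℝ) : ℂ)))
    from funext fun t => by ring]
  rw [intervalIntegral.integral_const_mul, kernel_window hT _ τ L R hL hR]

lemma window_le {T : ℝ} (hT : 0 < T) {N : ℕ} (q : ℕ) (φ : Fin N → ℝ) (c : Fin N → ℂ)
    (a : Fin N → ℝ) (ha : ∀ n, 0 ≤ a n) (hca : ∀ n, ‖c n‖ ≤ a n)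
    (τ L R : ℝ) (hL : L ≤ τ - T) (hR : τ + T ≤ R) :
    (∫ t in L..R, psiK T (t - τ) * ‖SfunK φ c t‖ ^ (2*q))
      ≤ ∫ t in (-T)..T, psiK T (t - 0) * ‖SfunK φ (fun n => ((a n : ℝ) : ℂ)) t‖ ^ (2*q) := by
  set ac : Fin N → ℂ := fun n => ((a n : ℝ) : ℂ) with hac
  set A : (Fin q → Fin N) → ℝ := fun ν => ∏ i, a (ν i) with hA
  set Θ : (Fin q → Fin N) → (Fin q → Fin N) → ℝ :=
    fun ν μ => PhiK q φ ν - PhiK q φ μ with hΘ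
  have hCa : ∀ ν : Fin q → Fin N, CprodK q ac ν = ((A ν : ℝ) : ℂ) := by
    intro ν
    rw [hac, hA]
    unfold CprodK
    push_cast
    rfl
  have hAnn : ∀ ν, 0 ≤ A ν := fun ν => Finset.prod_nonneg (fun i _ => ha (ν i))
  have hnormC : ∀ ν, ‖CprodK q c ν‖ ≤ A ν := by
    intro ν
    unfold CprodK
    rw [norm_prod]
    exact Finset.prod_le_prod (fun i _ => norm_nonneg _) (fun i _ => hca (ν i))
  have h2 := key_expand hT q φ ac 0 (-T) T (by linarith) (by linarith)
  simp only [hCa, Complex.conj_ofReal, Complex.ofReal_zero, mul_zero, zero_mul,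
    Complex.exp_zero, one_mul] at h2
  have h2' : (∫ t in (-T)..T, psiK T (t - 0) * ‖SfunK φ ac t‖ ^ (2*q))
      = ∑ ν : Fin q → Fin N, ∑ μ : Fin q → Fin N, A ν * A μ * WK T (Θ ν μ) := by
    have : ((∫ t in (-T)..T, psiK T (t - 0) * ‖SfunK φ ac t‖ ^ (2*q) : ℝ) : ℂ)
        = ((∑ ν : Fin q → Fin N, ∑ μ : Fin q → Fin N, A ν * A μ * WK T (Θ ν μ) : ℝ) : ℂ) := by
      rw [h2]
      push_cast
      apply Finset.sum_congr rfl
      intro ν _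
      apply Finset.sum_congr rfl
      intro μ _
      ring
    exact_mod_cast this
  have h1 := key_expand hT q φ c τ L R hL hR
  have hre : (∫ t in L..R, psiK T (t - τ) * ‖SfunK φ c t‖ ^ (2*q))
      = (((∫ t in L..R, psiK T (t - τ) * ‖SfunK φ c t‖ ^ (2*q) : ℝ) : ℂ)).re :=
    (Complex.ofReal_re _).symm
  rw [hre, h1, h2']
  have hnorm_exp : ∀ θ : ℝ, ‖Complex.exp (Complex.I * τ * (θ : ℂ))‖ = 1 := by
    intro θ
    rw [Complex.norm_exp]
    simp
  calc (∑ ν : Fin q → Fin N, ∑ μ : Fin q → Fin N,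
        (CprodK q c ν * (starRingEnd ℂ) (CprodK q c μ)) *
          (Complex.exp (Complex.I * τ * ((Θ ν μ : ℝ) : ℂ)) * ((WK T (Θ ν μ) : ℝ) : ℂ))).re
      ≤ ‖∑ ν : Fin q → Fin N, ∑ μ : Fin q → Fin N,
        (CprodK q c ν * (starRingEnd ℂ) (CprodK q c μ)) *
          (Complex.exp (Complex.I * τ * ((Θ ν μ : ℝ) : ℂ)) * ((WK T (Θ ν μ) : ℝ) : ℂ))‖ :=
        Complex.re_le_norm _
    _ ≤ ∑ ν : Fin q → Fin N, ∑ μ : Fin q → Fin N,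
        ‖(CprodK q c ν * (starRingEnd ℂ) (CprodK q c μ)) *
          (Complex.exp (Complex.I * τ * ((Θ ν μ : ℝ) : ℂ)) * ((WK T (Θ ν μ) : ℝ) : ℂ))‖ :=
        (norm_sum_le _ _).trans (Finset.sum_le_sum (fun ν _ => norm_sum_le _ _))
    _ ≤ ∑ ν : Fin q → Fin N, ∑ μ : Fin q → Fin N, A ν * A μ * WK T (Θ ν μ) := by
        apply Finset.sum_le_sum
        intro ν _
        apply Finset.sum_le_sum
        intro μ _
        rw [norm_mul, norm_mul, norm_mul, hnorm_exp, one_mul, RCLike.norm_conj,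
          Complex.norm_real, Real.norm_eq_abs, _root_.abs_of_nonneg (WK_nonneg hT _)]
        have h3 : ‖CprodK q c ν‖ * ‖CprodK q c μ‖ ≤ A ν * A μ :=
          mul_le_mul (hnormC ν) (hnormC μ) (norm_nonneg _) (hAnn ν)
        exact mul_le_mul_of_nonneg_right h3 (WK_nonneg hT _)

theorem stmt_2 (q : ℕ) (hq : 0 < q) (N : ℕ) (φ : Fin N → ℝ) (c : Fin N → ℂ)
    (a : Fin N → ℝ) (ha : ∀ n, 0 ≤ a n) (hca : ∀ n, ‖c n‖ ≤ a n)
    (T T₀ : ℝ) (hT : 0 < T) :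
    (∫ t in (T₀ - T)..(T₀ + T), ‖∑ n, c n * Complex.exp (Complex.I * t * φ n)‖ ^ (2 * q)) ≤
      3 * ∫ t in (-T)..T, ‖∑ n, (a n : ℂ) * Complex.exp (Complex.I * t * φ n)‖ ^ (2 * q) := by
  set ac : Fin N → ℂ := fun n => ((a n : ℝ) : ℂ) with hac
  show (∫ t in (T₀ - T)..(T₀ + T), ‖SfunK φ c t‖ ^ (2 * q))
      ≤ 3 * ∫ t in (-T)..T, ‖SfunK φ ac t‖ ^ (2 * q)
  have hGc_cont : Continuous fun t => ‖SfunK φ c t‖ ^ (2 * q) :=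
    ((SfunK_continuous φ c).norm).pow _
  have hGa_cont : Continuous fun t => ‖SfunK φ ac t‖ ^ (2 * q) :=
    ((SfunK_continuous φ ac).norm).pow _
  have hGc_nonneg : ∀ t, 0 ≤ ‖SfunK φ c t‖ ^ (2 * q) := fun t => pow_nonneg (norm_nonneg _) _
  have hGa_nonneg : ∀ t, 0 ≤ ‖SfunK φ ac t‖ ^ (2 * q) := fun t => pow_nonneg (norm_nonneg _) _
  have hpsic : ∀ τ : ℝ, Continuous fun t : ℝ => psiK T (t - τ) :=
    fun τ => (psiK_continuous T).comp (by fun_prop)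
  set g : ℝ → ℝ := fun t =>
    (psiK T (t - T₀) + psiK T (t - (T₀ - T)) + psiK T (t - (T₀ + T)))
      * ‖SfunK φ c t‖ ^ (2 * q) with hg
  have hg_cont : Continuous g := (((hpsic T₀).add (hpsic (T₀ - T))).add (hpsic (T₀ + T))).mul
    hGc_cont
  have hg_nonneg : ∀ t, 0 ≤ g t := by
    intro t
    apply mul_nonneg _ (hGc_nonneg t)
    have := psiK_nonneg T (t - T₀)
    have := psiK_nonneg T (t - (T₀ - T))
    have := psiK_nonneg T (t - (T₀ + T))
    linarith
  have stepA0 : (∫ t in (T₀ - T)..(T₀ + T), ‖SfunK φ c t‖ ^ (2 * q))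
      ≤ ∫ t in (T₀ - T)..(T₀ + T), g t := by
    apply intervalIntegral.integral_mono_on (by linarith)
      (hGc_cont.intervalIntegrable _ _) (hg_cont.intervalIntegrable _ _)
    intro t ht
    have hsum := one_le_three_psiK hT (s := t - T₀)
      (abs_le.2 ⟨by linarith [ht.1], by linarith [ht.2]⟩)
    rw [hg]
    have e1 : t - (T₀ - T) = (t - T₀) + T := by ring
    have e2 : t - (T₀ + T) = (t - T₀) - T := by ring
    simp only [e1, e2]
    nlinarith [hGc_nonneg t, hsum]
  have stepA1 : (∫ t in (T₀ - T)..(T₀ + T), g t)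
      ≤ ∫ t in (T₀ - 2*T)..(T₀ + 2*T), g t := by
    apply intervalIntegral.integral_mono_interval (by linarith) (by linarith) (by linarith)
      (Filter.Eventually.of_forall hg_nonneg) (hg_cont.intervalIntegrable _ _)
  have stepA2 : (∫ t in (T₀ - 2*T)..(T₀ + 2*T), g t)
      = (∫ t in (T₀ - 2*T)..(T₀ + 2*T), psiK T (t - T₀) * ‖SfunK φ c t‖ ^ (2 * q))
      + (∫ t in (T₀ - 2*T)..(T₀ + 2*T), psiK T (t - (T₀ - T)) * ‖SfunK φ c t‖ ^ (2 * q))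
      + (∫ t in (T₀ - 2*T)..(T₀ + 2*T), psiK T (t - (T₀ + T)) * ‖SfunK φ c t‖ ^ (2 * q)) := by
    rw [← intervalIntegral.integral_add (f := fun t => psiK T (t - T₀) * ‖SfunK φ c t‖ ^ (2 * q))
      (g := fun t => psiK T (t - (T₀ - T)) * ‖SfunK φ c t‖ ^ (2 * q))
      (((hpsic T₀).mul hGc_cont).intervalIntegrable _ _)
      (((hpsic (T₀ - T)).mul hGc_cont).intervalIntegrable _ _),
      ← intervalIntegral.integral_add
        (f := fun t => psiK T (t - T₀) * ‖SfunK φ c t‖ ^ (2 * q)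
          + psiK T (t - (T₀ - T)) * ‖SfunK φ c t‖ ^ (2 * q))
        (g := fun t => psiK T (t - (T₀ + T)) * ‖SfunK φ c t‖ ^ (2 * q))
        ((((hpsic T₀).mul hGc_cont).add
        ((hpsic (T₀ - T)).mul hGc_cont)).intervalIntegrable _ _)
      (((hpsic (T₀ + T)).mul hGc_cont).intervalIntegrable _ _)]
    apply intervalIntegral.integral_congr
    intro t _
    rw [hg]
    ring
  set B : ℝ := ∫ t in (-T)..T, psiK T (t - 0) * ‖SfunK φ ac t‖ ^ (2 * q) with hB
  have h1 : (∫ t in (T₀ - 2*T)..(T₀ + 2*T), psiK T (t - T₀) * ‖SfunK φ c t‖ ^ (2 * q)) ≤ B :=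
    window_le hT q φ c a ha hca T₀ _ _ (by linarith) (by linarith)
  have h2 : (∫ t in (T₀ - 2*T)..(T₀ + 2*T), psiK T (t - (T₀ - T)) * ‖SfunK φ c t‖ ^ (2 * q)) ≤ B :=
    window_le hT q φ c a ha hca (T₀ - T) _ _ (by linarith) (by linarith)
  have h3 : (∫ t in (T₀ - 2*T)..(T₀ + 2*T), psiK T (t - (T₀ + T)) * ‖SfunK φ c t‖ ^ (2 * q)) ≤ B :=
    window_le hT q φ c a ha hca (T₀ + T) _ _ (by linarith) (by linarith)
  have hB4 : B ≤ ∫ t in (-T)..T, ‖SfunK φ ac t‖ ^ (2 * q) := by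
    rw [hB]
    apply intervalIntegral.integral_mono_on (by linarith)
      (((hpsic 0).mul hGa_cont).intervalIntegrable _ _) (hGa_cont.intervalIntegrable _ _)
    intro t _
    calc psiK T (t - 0) * ‖SfunK φ ac t‖ ^ (2 * q)
        ≤ 1 * ‖SfunK φ ac t‖ ^ (2 * q) :=
          mul_le_mul_of_nonneg_right (psiK_le_one hT _) (hGa_nonneg t)
      _ = ‖SfunK φ ac t‖ ^ (2 * q) := one_mul _
  linarith
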